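/- For every integer n ≥ 0 the following identities of real polynomials hold: U_{2n} − U_{2n−1} − 1 = 2(x−1)·U_{n−1}·(U_n + U_{n−1}); U_{2n} + U_{2n−1} − 1 = 2(x+1)·U_{n−1}·(U_n − U_{n−1}); U_{2n} − U_{2n−1} + 1 = (U_n − U_{n−1})(U_n − U_{n−2}); and U_{2n} + U_{2n−1} + 1 = (U_n + U_{n−1})(U_n − U_{n−2}). -/

import Mathlib

open Polynomial Polynomial.Chebyshev

lemma U_add_mul_eq (m : ℤ) : ∀ n : ℤ,
    U ℝ (m + n) = U ℝ m * U ℝ n - U ℝ (m - 1) * U ℝ (n - 1) := by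
  have key : ∀ n : ℤ,
      (U ℝ (m + n) = U ℝ m * U ℝ n - U ℝ (m - 1) * U ℝ (n - 1)) ∧
      (U ℝ (m + (n + 1)) = U ℝ m * U ℝ (n + 1) - U ℝ (m - 1) * U ℝ (n + 1 - 1)) := by
    intro n
    induction n using Int.induction_on with
    | zero =>
      refine ⟨by simp, ?_⟩
      simp only [zero_add, U_one, U_zero, sub_self, mul_one]
      linear_combination U_add_one ℝ m
    | succ k ih =>
      obtain ⟨h1, h2⟩ := ih
      refine ⟨by exact_mod_cast h2, ?_⟩
      linear_combination (norm := ring_nf) U_add_two ℝ (m + k) -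
        U ℝ m * U_add_two ℝ (k : ℤ) + 2 * (X : ℝ[X]) * h2 - h1 +
        U ℝ (m - 1) * U_add_one ℝ (k : ℤ)
    | pred k ih =>
      obtain ⟨h1, h2⟩ := ih
      refine ⟨?_, by
        have e0 : m + (-(k : ℤ) - 1 + 1) = m + -(k : ℤ) := by ring
        rw [e0, show (-(k : ℤ) - 1 + 1) = -(k : ℤ) by ring]
        linear_combination (norm := ring_nf) h1⟩
      linear_combination (norm := ring_nf) U_sub_two ℝ (m + -(k : ℤ) + 1) +
        2 * (X : ℝ[X]) * h1 - h2 - U ℝ m * U_sub_two ℝ (-(k : ℤ) + 1) +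
        U ℝ (m - 1) * U_sub_two ℝ (-(k : ℤ))
  exact fun n => (key n).1

lemma U_norm (n : ℤ) : U ℝ (n - 1) ^ 2 - U ℝ n * U ℝ (n - 2) = 1 := by
  have h := U_add_mul_eq n (-n)
  rw [add_neg_cancel, U_zero, U_neg ℝ n, U_neg_sub_one ℝ n] at h
  have e : -n - 1 = -(n) - 1 := rfl
  linear_combination -h

theorem chebyshev_U_even_factorizations' (n : ℕ) :
    U ℝ (2 * (n : ℤ)) - U ℝ (2 * (n : ℤ) - 1) - 1 =
      2 * (X - 1) * U ℝ ((n : ℤ) - 1) * (U ℝ (n : ℤ) + U ℝ ((n : ℤ) - 1)) ∧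
    U ℝ (2 * (n : ℤ)) + U ℝ (2 * (n : ℤ) - 1) - 1 =
      2 * (X + 1) * U ℝ ((n : ℤ) - 1) * (U ℝ (n : ℤ) - U ℝ ((n : ℤ) - 1)) ∧
    U ℝ (2 * (n : ℤ)) - U ℝ (2 * (n : ℤ) - 1) + 1 =
      (U ℝ (n : ℤ) - U ℝ ((n : ℤ) - 1)) * (U ℝ (n : ℤ) - U ℝ ((n : ℤ) - 2)) ∧
    U ℝ (2 * (n : ℤ)) + U ℝ (2 * (n : ℤ) - 1) + 1 =
      (U ℝ (n : ℤ) + U ℝ ((n : ℤ) - 1)) * (U ℝ (n : ℤ) - U ℝ ((n : ℤ) - 2)) := by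
  have h2n : U ℝ (2 * (n : ℤ)) =
      U ℝ (n : ℤ) * U ℝ (n : ℤ) - U ℝ ((n : ℤ) - 1) * U ℝ ((n : ℤ) - 1) := by
    have := U_add_mul_eq (n : ℤ) (n : ℤ)
    rwa [show (n : ℤ) + n = 2 * n by ring] at this
  have h2n1 : U ℝ (2 * (n : ℤ) - 1) =
      U ℝ (n : ℤ) * U ℝ ((n : ℤ) - 1) - U ℝ ((n : ℤ) - 1) * U ℝ ((n : ℤ) - 2) := by
    have := U_add_mul_eq (n : ℤ) ((n : ℤ) - 1)
    rwa [show (n : ℤ) + (n - 1) = 2 * n - 1 by ring,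
      show (n : ℤ) - 1 - 1 = n - 2 by ring] at this
  have hsub := U_sub_two ℝ (n : ℤ)
  have hnorm := U_norm (n : ℤ)
  refine ⟨?_, ?_, ?_, ?_⟩
  · linear_combination h2n - h2n1 + hnorm + (U ℝ (n:ℤ) + U ℝ ((n:ℤ)-1)) * hsub
  · linear_combination h2n + h2n1 + hnorm + (U ℝ (n:ℤ) - U ℝ ((n:ℤ)-1)) * hsub
  · linear_combination h2n - h2n1 - hnorm
  · linear_combination h2n + h2n1 - hnorm
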